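/- In the Birget–Rhodes expansion Γ(G), for every g,h ∈ G the principal ideals ⟨Π(g)Π(h)⟩, ⟨Π(h)Π(h⁻¹g⁻¹)⟩, and ⟨Π(h⁻¹)Π(g⁻¹)⟩ coincide. -/

import Mathlib

/-- The Birget–Rhodes expansion of a group `G`: pairs `(R, g)` where `R` is a
finite subset of `G` containing `1` and `g`. -/
def BR (G : Type*) [Group G] [DecidableEq G] : Type _ :=
  {p : Finset G × G // (1 : G) ∈ p.1 ∧ p.2 ∈ p.1}

variable {G : Type*} [Group G] [DecidableEq G]

/-- Multiplication `(R,g)·(S,h) = (R ∪ gS, gh)`. -/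
instance : Mul (BR G) :=
  ⟨fun x y =>
    ⟨(x.1.1 ∪ y.1.1.image (x.1.2 * ·), x.1.2 * y.1.2),
      Finset.mem_union_left _ x.2.1,
      Finset.mem_union_right _ (Finset.mem_image_of_mem _ y.2.2)⟩⟩

/-- The universal map `Π(g) = ({1,g}, g)`. -/
def BRpi (g : G) : BR G :=
  ⟨({1, g}, g), Finset.mem_insert_self _ _,
    Finset.mem_insert_of_mem (Finset.mem_singleton_self _)⟩


/-- The principal two-sided ideal generated by `s`:
`⟨s⟩ = {s} ∪ sΓ(G) ∪ Γ(G)s ∪ Γ(G)sΓ(G)`. -/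
def princ (s : BR G) : Set (BR G) :=
  {t | t = s ∨ (∃ a, t = s * a) ∨ (∃ a, t = a * s) ∨ ∃ a b, t = a * s * b}

lemma BR.fst_mul (x y : BR G) :
    (x * y).1.1 = x.1.1 ∪ y.1.1.image (x.1.2 * ·) := rfl

lemma BR.snd_mul (x y : BR G) : (x * y).1.2 = x.1.2 * y.1.2 := rfl

lemma BR.ext {x y : BR G} (h1 : x.1.1 = y.1.1) (h2 : x.1.2 = y.1.2) : x = y :=
  Subtype.ext (Prod.ext h1 h2)

lemma BR_mul_assoc (x y z : BR G) : x * y * z = x * (y * z) := by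
  refine BR.ext ?_ (by simp [BR.snd_mul, mul_assoc])
  simp only [BR.fst_mul, BR.snd_mul, Finset.image_union, Finset.image_image,
    Finset.union_assoc]
  congr 2
  ext a
  simp [Function.comp, mul_assoc]

lemma princ_subset_of_two {s t a b : BR G} (hs : s = a * t * b) :
    princ s ⊆ princ t := by
  rintro u (rfl | ⟨c, rfl⟩ | ⟨c, rfl⟩ | ⟨c, d, rfl⟩) <;> subst hs
  · exact .inr (.inr (.inr ⟨a, b, rfl⟩))
  · exact .inr (.inr (.inr ⟨a, b * c, by simp [BR_mul_assoc]⟩))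
  · exact .inr (.inr (.inr ⟨c * a, b, by simp [BR_mul_assoc]⟩))
  · exact .inr (.inr (.inr ⟨c * a, b * d, by simp [BR_mul_assoc]⟩))

lemma princ_subset_of_left {s t a : BR G} (hs : s = a * t) :
    princ s ⊆ princ t := by
  rintro u (rfl | ⟨c, rfl⟩ | ⟨c, rfl⟩ | ⟨c, d, rfl⟩) <;> subst hs
  · exact .inr (.inr (.inl ⟨a, rfl⟩))
  · exact .inr (.inr (.inr ⟨a, c, rfl⟩))
  · exact .inr (.inr (.inl ⟨c * a, by simp [BR_mul_assoc]⟩))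
  · exact .inr (.inr (.inr ⟨c * a, d, by simp [BR_mul_assoc]⟩))

set_option maxHeartbeats 1000000 in
/-- `⟨Π(g)Π(h)⟩ = ⟨Π(h)Π(h⁻¹g⁻¹)⟩ = ⟨Π(h⁻¹)Π(g⁻¹)⟩`. -/
theorem princ_pi_two (g h : G) :
    princ (BRpi g * BRpi h) = princ (BRpi h * BRpi (h⁻¹ * g⁻¹)) ∧
    princ (BRpi h * BRpi (h⁻¹ * g⁻¹)) = princ (BRpi h⁻¹ * BRpi g⁻¹) := by
  have e1 : BRpi h * BRpi (h⁻¹ * g⁻¹) =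
      BRpi g⁻¹ * (BRpi g * BRpi h) * BRpi (h⁻¹ * g⁻¹) := by
    refine BR.ext ?_ (by simp only [BR.snd_mul]; simp [BRpi, mul_assoc])
    simp only [BR.fst_mul, BR.snd_mul]
    simp only [BRpi, Finset.image_insert,
      Finset.image_singleton]
    ext a
    simp only [Finset.image_union, Finset.image_insert, Finset.image_singleton,
      Finset.mem_union, Finset.mem_insert, Finset.mem_singleton,
      mul_one, one_mul, mul_assoc, mul_inv_cancel_left, inv_mul_cancel_left,
      mul_inv_cancel, inv_mul_cancel]
    tauto
  have e2 : BRpi g * BRpi h = BRpi g * (BRpi h * BRpi (h⁻¹ * g⁻¹)) * BRpi (g * h) := by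
    refine BR.ext ?_ (by simp only [BR.snd_mul]; simp [BRpi, mul_assoc])
    simp only [BR.fst_mul, BR.snd_mul]
    simp only [BRpi, Finset.image_insert,
      Finset.image_singleton]
    ext a
    simp only [Finset.image_union, Finset.image_insert, Finset.image_singleton,
      Finset.mem_union, Finset.mem_insert, Finset.mem_singleton,
      mul_one, one_mul, mul_assoc, mul_inv_cancel_left, inv_mul_cancel_left,
      mul_inv_cancel, inv_mul_cancel]
    tauto
  have e3 : BRpi h⁻¹ * BRpi g⁻¹ = BRpi h⁻¹ * (BRpi h * BRpi (h⁻¹ * g⁻¹)) := by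
    refine BR.ext ?_ (by simp only [BR.snd_mul]; simp [BRpi, mul_assoc])
    simp only [BR.fst_mul, BR.snd_mul]
    simp only [BRpi, Finset.image_insert,
      Finset.image_singleton]
    ext a
    simp only [Finset.image_union, Finset.image_insert, Finset.image_singleton,
      Finset.mem_union, Finset.mem_insert, Finset.mem_singleton,
      mul_one, one_mul, mul_assoc, mul_inv_cancel_left, inv_mul_cancel_left,
      mul_inv_cancel, inv_mul_cancel]
    tauto
  have e4 : BRpi h * BRpi (h⁻¹ * g⁻¹) = BRpi h * (BRpi h⁻¹ * BRpi g⁻¹) := by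
    refine BR.ext ?_ (by simp only [BR.snd_mul]; simp [BRpi, mul_assoc])
    simp only [BR.fst_mul, BR.snd_mul]
    simp only [BRpi, Finset.image_insert,
      Finset.image_singleton]
    ext a
    simp only [Finset.image_union, Finset.image_insert, Finset.image_singleton,
      Finset.mem_union, Finset.mem_insert, Finset.mem_singleton,
      mul_one, one_mul, mul_assoc, mul_inv_cancel_left, inv_mul_cancel_left,
      mul_inv_cancel, inv_mul_cancel]
    tauto
  exact ⟨Set.Subset.antisymm (princ_subset_of_two e2) (princ_subset_of_two e1),
    Set.Subset.antisymm (princ_subset_of_left e4) (princ_subset_of_left e3)⟩
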